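/- (Theorem 2 of the paper, compound-free form.) Let D = diag(d₁,…,dₙ) ∈ ℝ^{n×n}, W₁ ∈ ℝ^{n×m}, W₂ ∈ ℝ^{q×n}, let Ω ⊆ ℝⁿ, let f : ℝ^q → ℝ^m be continuously differentiable with Jacobian matrix J_f(z) ∈ ℝ^{m×q} at z, and let k be an integer with 1 ≤ k ≤ n. Define α_k := (1/k)·min{ d_{i₁} + ⋯ + d_{i_k} : 1 ≤ i₁ < ⋯ < i_k ≤ n }. Assume α_k > 0 and that for all x ∈ Ω, ‖J_f(W₂x)‖₂² · Σ_{i=1}^k s_i(W₁)·s_i(W₂) < α_k²·k. Then for every x ∈ Ω, the Jacobian J(x) := −D + W₁ J_f(W₂x) W₂ of the networked system ẋ = −Dx + W₁ f(W₂x) + v satisfies tr(Vᵀ(J(x) + J(x)ᵀ)V) < 0 for every k-frame V ∈ ℝ^{n×k}; i.e., the sum of the k largest eigenvalues of J(x) + J(x)ᵀ is negative, so the system is k-contractive. -/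

import Mathlib

open Matrix

/-- A `k`-frame in `ℝⁿ`: a matrix `V ∈ ℝ^{n×k}` with `VᵀV = I_k`. -/
def IsFrame {n k : ℕ} (V : Matrix (Fin n) (Fin k) ℝ) : Prop := Vᵀ * V = 1

/-- Rearrangement of a tuple in decreasing order. -/
noncomputable def sortedDesc {m : ℕ} (f : Fin m → ℝ) : Fin m → ℝ :=
  fun i => (f ∘ Tuple.sort f) i.rev

/-- The `i`-th largest squared singular value of a real matrix (the `i`-th largest
eigenvalue of `MᵀM`, counted with multiplicity), zero-indexed and padded by zero. -/
noncomputable def sqSingVal {n m : ℕ} (M : Matrix (Fin n) (Fin m) ℝ) (i : ℕ) : ℝ :=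
  if h : i < m then
    sortedDesc (show (Mᵀ * M).IsHermitian by
      simpa using Matrix.isHermitian_conjTranspose_mul_self M).eigenvalues ⟨i, h⟩
  else 0

/-- The operator norm of a matrix, induced by the Euclidean norms
(i.e. the largest singular value). -/
noncomputable def l2OpNorm {n m : ℕ} (M : Matrix (Fin n) (Fin m) ℝ) : ℝ :=
  ‖LinearMap.toContinuousLinearMap (Matrix.toEuclideanLin M)‖


section Helpers
open Finset

lemma dot_sq_le {p : ℕ} (a b : Fin p → ℝ) :
    (a ⬝ᵥ b)^2 ≤ (a ⬝ᵥ a) * (b ⬝ᵥ b) := by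
  simpa [dotProduct, sq] using Finset.sum_mul_sq_le_sq_mul_sq Finset.univ a b

lemma dot_self_nonneg {p : ℕ} (a : Fin p → ℝ) : 0 ≤ a ⬝ᵥ a :=
  Finset.sum_nonneg fun i _ => mul_self_nonneg _

lemma proj_dot_le {p : ℕ} (P : Matrix (Fin p) (Fin p) ℝ) (hsym : Pᵀ = P) (hidem : P * P = P)
    (a : Fin p → ℝ) : a ⬝ᵥ (P *ᵥ a) ≤ a ⬝ᵥ a := by
  have h1 : a ⬝ᵥ (P *ᵥ a) = (P *ᵥ a) ⬝ᵥ (P *ᵥ a) := by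
    conv_lhs => rw [← hidem, ← mulVec_mulVec, dotProduct_mulVec]
    congr 1
    rw [← mulVec_transpose, hsym]
  have h0 : 0 ≤ a ⬝ᵥ (P *ᵥ a) := h1 ▸ dot_self_nonneg _
  have h2 := dot_sq_le a (P *ᵥ a)
  rw [← h1] at h2
  nlinarith [dot_self_nonneg a]

lemma dot_VVt {n k : ℕ} (V : Matrix (Fin n) (Fin k) ℝ) (a : Fin n → ℝ) :
    a ⬝ᵥ ((V * Vᵀ) *ᵥ a) = (Vᵀ *ᵥ a) ⬝ᵥ (Vᵀ *ᵥ a) := by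
  rw [← mulVec_mulVec, dotProduct_mulVec]
  congr 1
  rw [← mulVec_transpose]

lemma min_subset_le_weighted {n k : ℕ} (hk1 : 1 ≤ k) (d t : Fin n → ℝ) (I : Finset (Fin n))
    (hI : I.card = k)
    (ht0 : ∀ i, 0 ≤ t i) (ht1 : ∀ i, t i ≤ 1) (htsum : ∑ i, t i = k)
    (hmin : ∀ i ∈ I, ∀ j ∉ I, d i ≤ d j) :
    ∑ i ∈ I, d i ≤ ∑ i, d i * t i := by
  have hne : I.Nonempty := Finset.card_pos.mp (by omega)
  obtain ⟨i₀, hi₀, hc⟩ := Finset.exists_mem_eq_sup' hne d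
  set c := I.sup' hne d with hcdef
  have hcI : ∀ i ∈ I, d i ≤ c := fun i hi => Finset.le_sup' d hi
  have hcO : ∀ j ∉ I, c ≤ d j := fun j hj => by rw [hc]; exact hmin i₀ hi₀ j hj
  have split : ∑ i, d i * t i = ∑ i ∈ I, d i * t i + ∑ i ∈ Iᶜ, d i * t i :=
    (Finset.sum_add_sum_compl I _).symm
  have h1 : ∑ i ∈ Iᶜ, c * t i ≤ ∑ i ∈ Iᶜ, d i * t i :=
    Finset.sum_le_sum fun i hi => mul_le_mul_of_nonneg_right (hcO i (Finset.mem_compl.mp hi)) (ht0 i)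
  have h2 : ∑ i ∈ Iᶜ, t i = k - ∑ i ∈ I, t i := by
    have h3 := Finset.sum_add_sum_compl I t
    rw [htsum] at h3; linarith
  have h4 : ∑ i ∈ Iᶜ, c * t i = c * (k - ∑ i ∈ I, t i) := by
    rw [← Finset.mul_sum, h2]
  have h5 : c * ((k : ℝ) - ∑ i ∈ I, t i) = ∑ i ∈ I, c * (1 - t i) := by
    have : ∑ i ∈ I, c * (1 - t i) = c * ∑ i ∈ I, (1 - t i) := (Finset.mul_sum ..).symm
    rw [this, Finset.sum_sub_distrib, Finset.sum_const, hI]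
    simp
  have h6 : ∑ i ∈ I, d i ≤ ∑ i ∈ I, (d i * t i + c * (1 - t i)) := by
    apply Finset.sum_le_sum
    intro i hi
    nlinarith [hcI i hi, ht1 i]
  calc ∑ i ∈ I, d i ≤ ∑ i ∈ I, (d i * t i + c * (1 - t i)) := h6
    _ = ∑ i ∈ I, d i * t i + c * ((k:ℝ) - ∑ i ∈ I, t i) := by rw [Finset.sum_add_distrib, h5]
    _ = ∑ i ∈ I, d i * t i + ∑ i ∈ Iᶜ, c * t i := by rw [h4]
    _ ≤ ∑ i ∈ I, d i * t i + ∑ i ∈ Iᶜ, d i * t i := by linarith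
    _ = ∑ i, d i * t i := split.symm

lemma topk_eq_filter {m k : ℕ} (μ : Fin m → ℝ) :
    ∑ i ∈ Finset.range k, (if h : i < m then μ ⟨i, h⟩ else 0)
      = ∑ j ∈ Finset.univ.filter (fun j : Fin m => (j : ℕ) < k), μ j := by
  have step1 : ∀ i ∈ Finset.range k, (if h : i < m then μ ⟨i, h⟩ else 0)
      = ∑ j : Fin m, if (j : ℕ) = i then μ j else 0 := by
    intro i _
    by_cases h : i < m
    · rw [dif_pos h]
      have : ∀ j : Fin m, (if (j : ℕ) = i then μ j else 0)
          = if j = ⟨i, h⟩ then μ j else 0 := by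
        intro j; congr 1; simp [Fin.ext_iff]
      rw [Finset.sum_congr rfl (fun j _ => this j)]
      simp
    · rw [dif_neg h]
      refine (Finset.sum_eq_zero fun j _ => ?_).symm
      rw [if_neg]; omega
  rw [Finset.sum_congr rfl step1, Finset.sum_comm]
  rw [Finset.sum_filter]
  refine Finset.sum_congr rfl fun j _ => ?_
  simp [Finset.sum_ite_eq]

lemma weighted_le_topk {m k : ℕ} (μ t : Fin m → ℝ) (hmono : Antitone μ) (hμ0 : ∀ j, 0 ≤ μ j)
    (ht0 : ∀ j, 0 ≤ t j) (ht1 : ∀ j, t j ≤ 1) (htsum : ∑ j, t j ≤ k) :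
    ∑ j, μ j * t j ≤ ∑ i ∈ Finset.range k, (if h : i < m then μ ⟨i, h⟩ else 0) := by
  rw [topk_eq_filter]
  set A : Finset (Fin m) := Finset.univ.filter (fun j : Fin m => (j : ℕ) < k) with hA
  by_cases hkm : m ≤ k
  · have hAuniv : A = Finset.univ := by
      ext j; simp [hA]; omega
    rw [hAuniv]
    exact Finset.sum_le_sum fun j _ =>
      mul_le_of_le_one_right (hμ0 j) (ht1 j)
  · push_neg at hkm
    set c := μ ⟨k, hkm⟩ with hcdef
    have hc0 : 0 ≤ c := hμ0 _
    have hcardA : A.card = k := by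
      have : A = Finset.image (Fin.castLE hkm.le) Finset.univ := by
        ext j
        simp only [hA, Finset.mem_filter, Finset.mem_univ, true_and, Finset.mem_image]
        constructor
        · intro hj; exact ⟨⟨j, hj⟩, rfl⟩
        · rintro ⟨i, -, rfl⟩; exact i.isLt
      rw [this, Finset.card_image_of_injective _ (Fin.castLE_injective hkm.le)]
      simp
    have hcA : ∀ j ∈ A, c ≤ μ j := by
      intro j hj
      apply hmono
      simp only [hA, Finset.mem_filter] at hj
      exact Fin.le_def.mpr (le_of_lt hj.2)
    have hcO : ∀ j ∉ A, μ j ≤ c := by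
      intro j hj
      apply hmono
      simp only [hA, Finset.mem_filter, Finset.mem_univ, true_and, not_lt] at hj
      exact Fin.le_def.mpr hj
    have split : ∑ j, μ j * t j = ∑ j ∈ A, μ j * t j + ∑ j ∈ Aᶜ, μ j * t j :=
      (Finset.sum_add_sum_compl A _).symm
    have h1 : ∑ j ∈ Aᶜ, μ j * t j ≤ ∑ j ∈ Aᶜ, c * t j :=
      Finset.sum_le_sum fun j hj =>
        mul_le_mul_of_nonneg_right (hcO j (Finset.mem_compl.mp hj)) (ht0 j)
    have h2 : ∑ j ∈ Aᶜ, t j ≤ (k : ℝ) - ∑ j ∈ A, t j := by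
      have h3 := Finset.sum_add_sum_compl A t
      linarith
    have h4 : ∑ j ∈ Aᶜ, c * t j ≤ c * ((k : ℝ) - ∑ j ∈ A, t j) := by
      rw [← Finset.mul_sum]
      exact mul_le_mul_of_nonneg_left h2 hc0
    have h5 : c * ((k : ℝ) - ∑ j ∈ A, t j) = ∑ j ∈ A, c * (1 - t j) := by
      have : ∑ j ∈ A, c * (1 - t j) = c * ∑ j ∈ A, (1 - t j) := (Finset.mul_sum ..).symm
      rw [this, Finset.sum_sub_distrib, Finset.sum_const, hcardA]
      simp
    have h6 : ∑ j ∈ A, (μ j * t j + c * (1 - t j)) ≤ ∑ j ∈ A, μ j := by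
      apply Finset.sum_le_sum
      intro j hj
      nlinarith [hcA j hj, ht1 j]
    calc ∑ j, μ j * t j = ∑ j ∈ A, μ j * t j + ∑ j ∈ Aᶜ, μ j * t j := split
      _ ≤ ∑ j ∈ A, μ j * t j + c * ((k:ℝ) - ∑ j ∈ A, t j) := by linarith
      _ = ∑ j ∈ A, (μ j * t j + c * (1 - t j)) := by
          rw [h5, ← Finset.sum_add_distrib]
      _ ≤ ∑ j ∈ A, μ j := h6

lemma sortedDesc_antitone {m : ℕ} (f : Fin m → ℝ) : Antitone (sortedDesc f) := by
  intro i j hij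
  exact Tuple.monotone_sort f (Fin.rev_le_rev.mpr hij)

lemma sortedDesc_nonneg {m : ℕ} (f : Fin m → ℝ) (hf : ∀ j, 0 ≤ f j) (i : Fin m) :
    0 ≤ sortedDesc f i := hf _

lemma weighted_le_topk' {m k : ℕ} (lam t : Fin m → ℝ) (hl0 : ∀ j, 0 ≤ lam j)
    (ht0 : ∀ j, 0 ≤ t j) (ht1 : ∀ j, t j ≤ 1) (htsum : ∑ j, t j ≤ k) :
    ∑ j, lam j * t j ≤ ∑ i ∈ Finset.range k, (if h : i < m then sortedDesc lam ⟨i, h⟩ else 0) := by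
  set ρ : Equiv.Perm (Fin m) := Fin.revPerm.trans (Tuple.sort lam) with hρ
  have hsd : ∀ i, sortedDesc lam i = lam (ρ i) := fun i => rfl
  have key : ∑ j, lam j * t j = ∑ i, sortedDesc lam i * t (ρ i) := by
    rw [← Equiv.sum_comp ρ (fun j => lam j * t j)]
    exact Finset.sum_congr rfl fun i _ => by rw [hsd]
  rw [key]
  exact weighted_le_topk (sortedDesc lam) (fun i => t (ρ i)) (sortedDesc_antitone lam)
    (fun j => hl0 _) (fun j => ht0 _) (fun j => ht1 _)
    (by rw [Equiv.sum_comp ρ t]; exact htsum)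

lemma traceConj {n k : ℕ} (M : Matrix (Fin n) (Fin n) ℝ) (V : Matrix (Fin n) (Fin k) ℝ) :
    (Vᵀ * M * V).trace = ∑ c, (fun i => V i c) ⬝ᵥ (M *ᵥ (fun i => V i c)) := by
  rw [Matrix.mul_assoc]
  unfold Matrix.trace
  refine Finset.sum_congr rfl fun c _ => ?_
  simp only [Matrix.diag, Matrix.mul_apply, Matrix.transpose_apply, dotProduct, Matrix.mulVec,
    dotProduct]

lemma dot_sandwich {n a b : ℕ} (B₁ : Matrix (Fin n) (Fin a) ℝ) (M : Matrix (Fin a) (Fin b) ℝ)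
    (B₂ : Matrix (Fin b) (Fin n) ℝ) (u : Fin n → ℝ) :
    u ⬝ᵥ ((B₁ * M * B₂) *ᵥ u) = (B₁ᵀ *ᵥ u) ⬝ᵥ (M *ᵥ (B₂ *ᵥ u)) := by
  rw [← mulVec_mulVec, ← mulVec_mulVec, dotProduct_mulVec, ← mulVec_transpose]

lemma l2OpNorm_nonneg {n m : ℕ} (M : Matrix (Fin n) (Fin m) ℝ) : 0 ≤ l2OpNorm M :=
  norm_nonneg _

lemma mulVec_sqrt_le {a b : ℕ} (A : Matrix (Fin a) (Fin b) ℝ) (y : Fin b → ℝ) :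
    Real.sqrt ((A *ᵥ y) ⬝ᵥ (A *ᵥ y)) ≤ l2OpNorm A * Real.sqrt (y ⬝ᵥ y) := by
  have h := (LinearMap.toContinuousLinearMap (Matrix.toEuclideanLin A)).le_opNorm
    ((WithLp.equiv 2 (Fin b → ℝ)).symm y)
  simp only [LinearMap.coe_toContinuousLinearMap', Matrix.toEuclideanLin_apply] at h
  rw [EuclideanSpace.norm_eq, EuclideanSpace.norm_eq] at h
  simpa [dotProduct, sq_abs, sq, l2OpNorm] using h

lemma frame_symm_idem {n k : ℕ} (V : Matrix (Fin n) (Fin k) ℝ) (hV : Vᵀ * V = 1) :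
    (V * Vᵀ)ᵀ = V * Vᵀ ∧ (V * Vᵀ) * (V * Vᵀ) = V * Vᵀ := by
  constructor
  · rw [Matrix.transpose_mul, Matrix.transpose_transpose]
  · rw [Matrix.mul_assoc, ← Matrix.mul_assoc Vᵀ, hV, Matrix.one_mul]

lemma dot_diag {b : ℕ} (lam : Fin b → ℝ) (z : Fin b → ℝ) :
    z ⬝ᵥ (Matrix.diagonal lam *ᵥ z) = ∑ j, lam j * (z j * z j) := by
  simp [dotProduct, Matrix.mulVec_diagonal]
  ring_nf
  exact Finset.sum_congr rfl fun j _ => by ring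

lemma kyfan {a b k : ℕ} (B : Matrix (Fin a) (Fin b) ℝ) (V : Matrix (Fin a) (Fin k) ℝ)
    (hV : Vᵀ * V = 1) :
    (Vᵀ * (B * Bᵀ) * V).trace ≤
      ∑ i ∈ Finset.range k, (if h : i < b then
        sortedDesc (show (Bᵀ * B).IsHermitian by
          simpa using Matrix.isHermitian_conjTranspose_mul_self B).eigenvalues ⟨i, h⟩ else 0) := by
  set hM := Matrix.isHermitian_conjTranspose_mul_self B with hMdef
  set lam := hM.eigenvalues with hlam
  set U : Matrix (Fin b) (Fin b) ℝ := (hM.eigenvectorUnitary : Matrix (Fin b) (Fin b) ℝ) with hUdef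
  have hlam0 : ∀ j, 0 ≤ lam j := by
    intro j
    have hps : (Bᵀ * B).PosSemidef := by
      have := Matrix.posSemidef_conjTranspose_mul_self B
      rwa [Matrix.conjTranspose_eq_transpose_of_trivial] at this
    exact hps.eigenvalues_nonneg j
  have hU1 : Uᵀ * U = 1 := by
    have h := hM.eigenvectorUnitary.2
    rw [Matrix.mem_unitaryGroup_iff'] at h
    rw [hUdef, ← Matrix.conjTranspose_eq_transpose_of_trivial]
    exact h
  have hU2 : U * Uᵀ = 1 := by
    have h := hM.eigenvectorUnitary.2
    rw [Matrix.mem_unitaryGroup_iff] at h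
    rw [hUdef, ← Matrix.conjTranspose_eq_transpose_of_trivial]
    exact h
  have hspec : Bᵀ * B = U * Matrix.diagonal lam * Uᵀ := by
    have h := hM.spectral_theorem
    rw [hUdef, ← Matrix.conjTranspose_eq_transpose_of_trivial]
    rw [Unitary.conjStarAlgAut_apply] at h
    exact h.trans (by rfl)
  set G : Matrix (Fin a) (Fin b) ℝ := B * U with hGdef
  have hGtG : Gᵀ * G = Matrix.diagonal lam := by
    have h1 : Gᵀ * G = Uᵀ * (Bᵀ * B) * U := by
      rw [hGdef, Matrix.transpose_mul]
      simp only [Matrix.mul_assoc]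
    rw [h1, hspec]
    have h2 : Uᵀ * (U * Matrix.diagonal lam * Uᵀ) * U
        = (Uᵀ * U) * Matrix.diagonal lam * (Uᵀ * U) := by
      simp only [Matrix.mul_assoc]
    rw [h2, hU1, Matrix.one_mul, Matrix.mul_one]
  have hGGt : G * Gᵀ = B * Bᵀ := by
    rw [hGdef, Matrix.transpose_mul]
    have : B * U * (Uᵀ * Bᵀ) = B * (U * Uᵀ) * Bᵀ := by simp only [Matrix.mul_assoc]
    rw [this, hU2, Matrix.mul_one]
  have hGcol : ∀ j, lam j = 0 → ∀ i, G i j = 0 := by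
    intro j hj i
    have h1 : (Gᵀ * G) j j = lam j := by rw [hGtG, Matrix.diagonal_apply_eq]
    have h2 : (Gᵀ * G) j j = ∑ i, G i j * G i j := by
      simp [Matrix.mul_apply, Matrix.transpose_apply]
    rw [h2, hj] at h1
    have h3 := (Finset.sum_eq_zero_iff_of_nonneg
      (fun i _ => mul_self_nonneg (G i j))).mp h1 i (Finset.mem_univ i)
    exact mul_self_eq_zero.mp h3
  set e : Fin b → ℝ := fun j => if lam j = 0 then 0 else (Real.sqrt (lam j))⁻¹ with he
  set f : Fin b → ℝ := fun j => if lam j = 0 then 0 else 1 with hf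
  set W : Matrix (Fin a) (Fin b) ℝ := G * Matrix.diagonal e with hWdef
  have hWE : ∀ i j, W i j = G i j * e j := by
    intro i j; rw [hWdef, Matrix.mul_diagonal]
  have hsqrt_ne : ∀ j, lam j ≠ 0 → Real.sqrt (lam j) ≠ 0 := by
    intro j hj
    rw [Real.sqrt_ne_zero' ]
    exact lt_of_le_of_ne (hlam0 j) (Ne.symm hj)
  have hWtW : Wᵀ * W = Matrix.diagonal f := by
    rw [hWdef, Matrix.transpose_mul, Matrix.diagonal_transpose]
    have h1 : Matrix.diagonal e * Gᵀ * (G * Matrix.diagonal e)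
        = Matrix.diagonal e * (Gᵀ * G) * Matrix.diagonal e := by simp only [Matrix.mul_assoc]
    rw [h1, hGtG, Matrix.diagonal_mul_diagonal, Matrix.diagonal_mul_diagonal]
    refine congrArg Matrix.diagonal (funext fun j => ?_)
    by_cases hj : lam j = 0
    · simp [he, hf, hj]
    · have hs := hsqrt_ne j hj
      simp only [he, hf, if_neg hj]
      field_simp
      exact (Real.sq_sqrt (hlam0 j)).symm
  have hWf : W * Matrix.diagonal f = W := by
    ext i j
    rw [Matrix.mul_diagonal]
    by_cases hj : lam j = 0
    · simp [hWE, he, hj]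
    · simp [hf, hj]
  have hWsq : W * Matrix.diagonal (fun j => Real.sqrt (lam j)) = G := by
    ext i j
    rw [Matrix.mul_diagonal, hWE]
    by_cases hj : lam j = 0
    · simp [hGcol j hj i]
    · have hs := hsqrt_ne j hj
      simp only [he, if_neg hj]
      field_simp
  have hWDW : W * Matrix.diagonal lam * Wᵀ = B * Bᵀ := by
    have hdd : Matrix.diagonal (fun j => Real.sqrt (lam j)) *
        Matrix.diagonal (fun j => Real.sqrt (lam j)) = Matrix.diagonal lam := by
      rw [Matrix.diagonal_mul_diagonal]
      exact congrArg Matrix.diagonal (funext fun j => Real.mul_self_sqrt (hlam0 j))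
    have h1 : W * Matrix.diagonal lam * Wᵀ
        = (W * Matrix.diagonal (fun j => Real.sqrt (lam j)))
          * (W * Matrix.diagonal (fun j => Real.sqrt (lam j)))ᵀ := by
      simp only [← hdd, Matrix.transpose_mul, Matrix.diagonal_transpose, Matrix.mul_assoc]
    rw [h1, hWsq, hGGt]
  -- the weights
  set P : Matrix (Fin a) (Fin a) ℝ := V * Vᵀ with hPdef
  obtain ⟨hPsym, hPidem⟩ := frame_symm_idem V hV
  set τ : Fin b → ℝ := fun j => (fun i => W i j) ⬝ᵥ (P *ᵥ (fun i => W i j)) with hτ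
  have ht0 : ∀ j, 0 ≤ τ j := by
    intro j
    rw [hτ]
    simp only [hPdef]
    rw [dot_VVt]
    exact dot_self_nonneg _
  have hwj : ∀ j, (fun i => W i j) ⬝ᵥ (fun i => W i j) = f j := by
    intro j
    have h1 : (fun i => W i j) ⬝ᵥ (fun i => W i j) = (Wᵀ * W) j j := by
      simp [Matrix.mul_apply, Matrix.transpose_apply, dotProduct]
    rw [h1, hWtW, Matrix.diagonal_apply_eq]
  have ht1 : ∀ j, τ j ≤ 1 := by
    intro j
    refine le_trans (proj_dot_le P hPsym hPidem _) ?_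
    rw [hwj j, hf]
    by_cases hj : lam j = 0 <;> simp [hj]
  have e1 : ∀ j, τ j = ∑ c, (∑ i, W i j * V i c) * (∑ i, W i j * V i c) := by
    intro j
    rw [hτ]
    simp only [hPdef]
    rw [dot_VVt]
    simp only [dotProduct, Matrix.mulVec, Matrix.transpose_apply, dotProduct]
    refine Finset.sum_congr rfl fun c _ => ?_
    congr 1 <;> exact Finset.sum_congr rfl fun i _ => mul_comm _ _
  have htsum : ∑ j, τ j ≤ (k : ℝ) := by
    have hP'sym : (W * Wᵀ)ᵀ = W * Wᵀ := by
      rw [Matrix.transpose_mul, Matrix.transpose_transpose]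
    have hP'idem : (W * Wᵀ) * (W * Wᵀ) = W * Wᵀ := by
      have h1 : (W * Wᵀ) * (W * Wᵀ) = W * (Wᵀ * W) * Wᵀ := by simp only [Matrix.mul_assoc]
      rw [h1, hWtW, hWf]
    have e2 : ∀ c, (fun i => V i c) ⬝ᵥ ((W * Wᵀ) *ᵥ (fun i => V i c))
        = ∑ j, (∑ i, W i j * V i c) * (∑ i, W i j * V i c) := by
      intro c
      rw [dot_VVt]
      simp only [dotProduct, Matrix.mulVec, Matrix.transpose_apply, dotProduct]
    have hswap : ∑ j, τ j = ∑ c, (fun i => V i c) ⬝ᵥ ((W * Wᵀ) *ᵥ (fun i => V i c)) := by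
      rw [Finset.sum_congr rfl fun j _ => e1 j, Finset.sum_congr rfl fun c _ => e2 c,
        Finset.sum_comm]
    rw [hswap]
    have hcol1 : ∀ c, (fun i => V i c) ⬝ᵥ (fun i => V i c) = 1 := by
      intro c
      have h1 : (fun i => V i c) ⬝ᵥ (fun i => V i c) = (Vᵀ * V) c c := by
        simp [Matrix.mul_apply, Matrix.transpose_apply, dotProduct]
      rw [h1, hV, Matrix.one_apply_eq]
    calc ∑ c, (fun i => V i c) ⬝ᵥ ((W * Wᵀ) *ᵥ (fun i => V i c))
        ≤ ∑ c : Fin k, (1 : ℝ) := by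
          refine Finset.sum_le_sum fun c _ => ?_
          refine le_trans (proj_dot_le _ hP'sym hP'idem _) ?_
          rw [hcol1 c]
      _ = (k : ℝ) := by simp
  -- main trace identity
  have hmain : (Vᵀ * (B * Bᵀ) * V).trace = ∑ j, lam j * τ j := by
    rw [traceConj, ← hWDW]
    have h1 : ∀ c, (fun i => V i c) ⬝ᵥ ((W * Matrix.diagonal lam * Wᵀ) *ᵥ (fun i => V i c))
        = ∑ j, lam j * ((∑ i, W i j * V i c) * (∑ i, W i j * V i c)) := by
      intro c
      rw [dot_sandwich, dot_diag]
      refine Finset.sum_congr rfl fun j _ => ?_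
      simp only [Matrix.mulVec, Matrix.transpose_apply, dotProduct]
    rw [Finset.sum_congr rfl fun c _ => h1 c, Finset.sum_comm]
    refine Finset.sum_congr rfl fun j _ => ?_
    rw [e1 j, Finset.mul_sum]
  rw [hmain]
  exact weighted_le_topk' lam τ hlam0 ht0 ht1 htsum

lemma kyfan2 {nn k : ℕ} (M : Matrix (Fin nn) (Fin nn) ℝ) (hM : M.IsHermitian)
    (hM0 : ∀ j, 0 ≤ hM.eigenvalues j) (V : Matrix (Fin nn) (Fin k) ℝ) (hV : Vᵀ * V = 1) :
    (Vᵀ * M * V).trace ≤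
      ∑ i ∈ Finset.range k, (if h : i < nn then sortedDesc hM.eigenvalues ⟨i, h⟩ else 0) := by
  set lam := hM.eigenvalues with hlam
  set U : Matrix (Fin nn) (Fin nn) ℝ := (hM.eigenvectorUnitary : Matrix (Fin nn) (Fin nn) ℝ)
    with hUdef
  have hU1 : Uᵀ * U = 1 := by
    have h := hM.eigenvectorUnitary.2
    rw [Matrix.mem_unitaryGroup_iff'] at h
    rw [hUdef, ← Matrix.conjTranspose_eq_transpose_of_trivial]
    exact h
  have hU2 : U * Uᵀ = 1 := by
    have h := hM.eigenvectorUnitary.2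
    rw [Matrix.mem_unitaryGroup_iff] at h
    rw [hUdef, ← Matrix.conjTranspose_eq_transpose_of_trivial]
    exact h
  have hspec : M = U * Matrix.diagonal lam * Uᵀ := by
    have h := hM.spectral_theorem
    rw [hUdef, ← Matrix.conjTranspose_eq_transpose_of_trivial]
    rw [Unitary.conjStarAlgAut_apply] at h
    exact h.trans (by rfl)
  set P : Matrix (Fin nn) (Fin nn) ℝ := V * Vᵀ with hPdef
  obtain ⟨hPsym, hPidem⟩ := frame_symm_idem V hV
  set τ : Fin nn → ℝ := fun j => (fun i => U i j) ⬝ᵥ (P *ᵥ (fun i => U i j)) with hτ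
  have ht0 : ∀ j, 0 ≤ τ j := by
    intro j
    rw [hτ]
    simp only [hPdef]
    rw [dot_VVt]
    exact dot_self_nonneg _
  have hwj : ∀ j, (fun i => U i j) ⬝ᵥ (fun i => U i j) = 1 := by
    intro j
    have h1 : (fun i => U i j) ⬝ᵥ (fun i => U i j) = (Uᵀ * U) j j := by
      simp [Matrix.mul_apply, Matrix.transpose_apply, dotProduct]
    rw [h1, hU1, Matrix.one_apply_eq]
  have ht1 : ∀ j, τ j ≤ 1 := by
    intro j
    refine le_trans (proj_dot_le P hPsym hPidem _) ?_
    rw [hwj j]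
  have e1 : ∀ j, τ j = ∑ c, (∑ i, U i j * V i c) * (∑ i, U i j * V i c) := by
    intro j
    rw [hτ]
    simp only [hPdef]
    rw [dot_VVt]
    simp only [dotProduct, Matrix.mulVec, Matrix.transpose_apply, dotProduct]
    refine Finset.sum_congr rfl fun c _ => ?_
    congr 1 <;> exact Finset.sum_congr rfl fun i _ => mul_comm _ _
  have htsum : ∑ j, τ j ≤ (k : ℝ) := by
    have e2 : ∀ c, (fun i => V i c) ⬝ᵥ ((U * Uᵀ) *ᵥ (fun i => V i c))
        = ∑ j, (∑ i, U i j * V i c) * (∑ i, U i j * V i c) := by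
      intro c
      rw [dot_VVt]
      simp only [dotProduct, Matrix.mulVec, Matrix.transpose_apply, dotProduct]
    have hswap : ∑ j, τ j = ∑ c, (fun i => V i c) ⬝ᵥ ((U * Uᵀ) *ᵥ (fun i => V i c)) := by
      rw [Finset.sum_congr rfl fun j _ => e1 j, Finset.sum_congr rfl fun c _ => e2 c,
        Finset.sum_comm]
    have hcol1 : ∀ c, (fun i => V i c) ⬝ᵥ (fun i => V i c) = 1 := by
      intro c
      have h1 : (fun i => V i c) ⬝ᵥ (fun i => V i c) = (Vᵀ * V) c c := by
        simp [Matrix.mul_apply, Matrix.transpose_apply, dotProduct]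
      rw [h1, hV, Matrix.one_apply_eq]
    rw [hswap, hU2]
    refine le_of_eq ?_
    rw [Finset.sum_congr rfl fun c (_ : c ∈ Finset.univ) => by
      rw [Matrix.one_mulVec, hcol1 c]]
    simp
  have hmain : (Vᵀ * M * V).trace = ∑ j, lam j * τ j := by
    rw [traceConj, hspec]
    have h1 : ∀ c, (fun i => V i c) ⬝ᵥ ((U * Matrix.diagonal lam * Uᵀ) *ᵥ (fun i => V i c))
        = ∑ j, lam j * ((∑ i, U i j * V i c) * (∑ i, U i j * V i c)) := by
      intro c
      rw [dot_sandwich, dot_diag]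
      refine Finset.sum_congr rfl fun j _ => ?_
      simp only [Matrix.mulVec, Matrix.transpose_apply, dotProduct]
    rw [Finset.sum_congr rfl fun c _ => h1 c, Finset.sum_comm]
    refine Finset.sum_congr rfl fun j _ => ?_
    rw [e1 j, Finset.mul_sum]
  rw [hmain]
  exact weighted_le_topk' lam τ hM0 ht0 ht1 htsum

lemma percol_cs {a b : ℕ} (A : Matrix (Fin a) (Fin b) ℝ) (x : Fin a → ℝ) (y : Fin b → ℝ) :
    x ⬝ᵥ (A *ᵥ y) ≤ Real.sqrt (x ⬝ᵥ x) * (l2OpNorm A * Real.sqrt (y ⬝ᵥ y)) := by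
  have h2 := dot_sq_le x (A *ᵥ y)
  calc x ⬝ᵥ (A *ᵥ y) ≤ |x ⬝ᵥ (A *ᵥ y)| := le_abs_self _
    _ = Real.sqrt ((x ⬝ᵥ (A *ᵥ y))^2) := (Real.sqrt_sq_eq_abs _).symm
    _ ≤ Real.sqrt ((x ⬝ᵥ x) * ((A *ᵥ y) ⬝ᵥ (A *ᵥ y))) := Real.sqrt_le_sqrt h2
    _ = Real.sqrt (x ⬝ᵥ x) * Real.sqrt ((A *ᵥ y) ⬝ᵥ (A *ᵥ y)) :=
        Real.sqrt_mul (dot_self_nonneg x) _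
    _ ≤ Real.sqrt (x ⬝ᵥ x) * (l2OpNorm A * Real.sqrt (y ⬝ᵥ y)) :=
        mul_le_mul_of_nonneg_left (mulVec_sqrt_le A y) (Real.sqrt_nonneg _)

lemma sum_sqrt_cs {k : ℕ} (F G : Fin k → ℝ) (hF : ∀ c, 0 ≤ F c) (hG : ∀ c, 0 ≤ G c) :
    ∑ c, Real.sqrt (F c) * Real.sqrt (G c)
      ≤ Real.sqrt (∑ c, F c) * Real.sqrt (∑ c, G c) := by
  have h := Finset.sum_mul_sq_le_sq_mul_sq Finset.univ
    (fun c => Real.sqrt (F c)) (fun c => Real.sqrt (G c))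
  have hFs : ∑ c, Real.sqrt (F c) ^ 2 = ∑ c, F c :=
    Finset.sum_congr rfl fun c _ => Real.sq_sqrt (hF c)
  have hGs : ∑ c, Real.sqrt (G c) ^ 2 = ∑ c, G c :=
    Finset.sum_congr rfl fun c _ => Real.sq_sqrt (hG c)
  rw [hFs, hGs] at h
  have h0 : 0 ≤ ∑ c, Real.sqrt (F c) * Real.sqrt (G c) :=
    Finset.sum_nonneg fun c _ => mul_nonneg (Real.sqrt_nonneg _) (Real.sqrt_nonneg _)
  calc ∑ c, Real.sqrt (F c) * Real.sqrt (G c)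
      = Real.sqrt ((∑ c, Real.sqrt (F c) * Real.sqrt (G c))^2) := (Real.sqrt_sq h0).symm
    _ ≤ Real.sqrt ((∑ c, F c) * (∑ c, G c)) := Real.sqrt_le_sqrt h
    _ = Real.sqrt (∑ c, F c) * Real.sqrt (∑ c, G c) :=
        Real.sqrt_mul (Finset.sum_nonneg fun c _ => hF c) _

end Helpers

/-- **Theorem 2 of the paper, compound-free form.** Consider the networked system
`ẋ = −Dx + W₁ f(W₂x) + v`, with `D = diag(d)` and `f` continuously differentiable with
Jacobian `J_f`.  Let `α_k` be `1/k` times the minimal sum of `k` of the `dᵢ`'s (expressed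
via `IsLeast`).  If `α_k > 0` and `‖J_f(W₂x)‖₂² Σ_{i=1}^k s_i(W₁)s_i(W₂) < α_k²k` on `Ω`,
then for every `x ∈ Ω` the Jacobian `J(x) = −D + W₁ J_f(W₂x) W₂` satisfies
`tr(Vᵀ(J(x)+J(x)ᵀ)V) < 0` for every `k`-frame `V`, i.e. the sum of the `k` largest
eigenvalues of `J(x)+J(x)ᵀ` is negative, so the system is `k`-contractive. -/
theorem networked_k_contraction {n m q : ℕ} (k : ℕ) (hk1 : 1 ≤ k) (hkn : k ≤ n)
    (d : Fin n → ℝ) (W₁ : Matrix (Fin n) (Fin m) ℝ) (W₂ : Matrix (Fin q) (Fin n) ℝ)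
    (Ω : Set (Fin n → ℝ)) (v : Fin n → ℝ)
    (f : (Fin q → ℝ) → (Fin m → ℝ)) (hf : ContDiff ℝ 1 f)
    (Jf : (Fin q → ℝ) → Matrix (Fin m) (Fin q) ℝ)
    (hJf : ∀ z, HasFDerivAt f (Matrix.mulVecLin (Jf z)).toContinuousLinearMap z)
    (αk : ℝ)
    (hαk : IsLeast {s : ℝ | ∃ I : Finset (Fin n), I.card = k ∧ ∑ i ∈ I, d i = s}
      ((k : ℝ) * αk))
    (hα : 0 < αk)
    (hgain : ∀ x ∈ Ω, (l2OpNorm (Jf (W₂ *ᵥ x))) ^ 2 *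
        ∑ i ∈ Finset.range k, sqSingVal W₁ i * sqSingVal W₂ i < αk ^ 2 * k) :
    ∀ x ∈ Ω, ∀ V : Matrix (Fin n) (Fin k) ℝ, IsFrame V →
      (Vᵀ * ((-(Matrix.diagonal d) + W₁ * Jf (W₂ *ᵥ x) * W₂)
        + (-(Matrix.diagonal d) + W₁ * Jf (W₂ *ᵥ x) * W₂)ᵀ) * V).trace < 0 := by
  intro x hx V hVframe
  have hV : Vᵀ * V = 1 := hVframe
  set A := Jf (W₂ *ᵥ x) with hA
  set Dg := Matrix.diagonal d with hDg
  set C := W₁ * A * W₂ with hC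
  -- Step 1: trace reduction
  have hCt : (Vᵀ * Cᵀ * V).trace = (Vᵀ * C * V).trace := by
    have h : (Vᵀ * Cᵀ * V)ᵀ = Vᵀ * C * V := by
      simp [Matrix.transpose_mul, Matrix.mul_assoc]
    rw [← h, Matrix.trace_transpose]
  have hred : (Vᵀ * ((-Dg + C) + (-Dg + C)ᵀ) * V).trace
      = 2 * ((Vᵀ * C * V).trace - (Vᵀ * Dg * V).trace) := by
    have hDt : Dgᵀ = Dg := by rw [hDg, Matrix.diagonal_transpose]
    simp only [Matrix.transpose_add, Matrix.transpose_neg, hDt, Matrix.add_mul, Matrix.mul_add,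
      Matrix.neg_mul, Matrix.mul_neg, Matrix.trace_add, Matrix.trace_neg, hCt]
    ring
  -- Step 2: lower bound on the diagonal part
  set t : Fin n → ℝ := fun i => ∑ c, V i c * V i c with ht
  have htD : (Vᵀ * Dg * V).trace = ∑ i, d i * t i := by
    rw [hDg, traceConj]
    rw [Finset.sum_congr rfl fun c (_ : c ∈ Finset.univ) => dot_diag d (fun i => V i c)]
    rw [Finset.sum_comm]
    exact Finset.sum_congr rfl fun i _ => (Finset.mul_sum ..).symm
  have ht0 : ∀ i, 0 ≤ t i := fun i => Finset.sum_nonneg fun c _ => mul_self_nonneg _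
  obtain ⟨hPsym, hPidem⟩ := frame_symm_idem V hV
  have ht1 : ∀ i, t i ≤ 1 := by
    intro i
    have hp := proj_dot_le (V * Vᵀ) hPsym hPidem (Pi.single i 1)
    rw [dot_VVt] at hp
    have h1 : (Vᵀ *ᵥ Pi.single i 1) = fun c => V i c := by
      funext c
      simp [Matrix.mulVec, dotProduct, Pi.single_apply, Matrix.transpose_apply]
    rw [h1] at hp
    have h2 : (Pi.single i 1 : Fin n → ℝ) ⬝ᵥ (Pi.single i 1) = 1 := by
      simp [dotProduct, Pi.single_apply]
    rw [h2] at hp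
    exact hp
  have htsum : ∑ i, t i = (k : ℝ) := by
    rw [Finset.sum_comm]
    have h1 : ∀ c : Fin k, ∑ i, V i c * V i c = 1 := by
      intro c
      have h2 : (Vᵀ * V) c c = ∑ i, V i c * V i c := by
        simp [Matrix.mul_apply, Matrix.transpose_apply]
      rw [← h2, hV, Matrix.one_apply_eq]
    rw [Finset.sum_congr rfl fun c _ => h1 c]
    simp
  obtain ⟨I, hIcard, hIsum⟩ := hαk.1
  have hswap : ∀ i ∈ I, ∀ j ∉ I, d i ≤ d j := by
    intro i hi j hj
    have hjn : j ∉ I.erase i := fun hmem => hj (Finset.mem_of_mem_erase hmem)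
    have hJ : (insert j (I.erase i)).card = k := by
      rw [Finset.card_insert_of_notMem hjn, Finset.card_erase_of_mem hi, hIcard]
      omega
    have herase : ∑ i' ∈ I.erase i, d i' = (k:ℝ) * αk - d i := by
      have h3 := Finset.add_sum_erase I d hi
      rw [hIsum] at h3
      linarith
    have hsumJ : ∑ i' ∈ insert j (I.erase i), d i' = (k:ℝ) * αk - d i + d j := by
      rw [Finset.sum_insert hjn, herase]
      ring
    have hge : (k:ℝ) * αk ≤ ∑ i' ∈ insert j (I.erase i), d i' :=
      hαk.2 ⟨insert j (I.erase i), hJ, rfl⟩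
    rw [hsumJ] at hge
    linarith
  have hDlow : (k:ℝ) * αk ≤ (Vᵀ * Dg * V).trace := by
    rw [htD, ← hIsum]
    exact min_subset_le_weighted hk1 d t I hIcard ht0 ht1 htsum hswap
  -- Step 3: Cauchy-Schwarz bound on the coupling part
  set N := l2OpNorm A with hN
  have hN0 : 0 ≤ N := norm_nonneg _
  set T₁ := (Vᵀ * (W₁ * W₁ᵀ) * V).trace with hT₁def
  set T₂ := (Vᵀ * (W₂ᵀ * W₂) * V).trace with hT₂def
  have hCtrace : (Vᵀ * C * V).trace
      = ∑ c, (W₁ᵀ *ᵥ (fun i => V i c)) ⬝ᵥ (A *ᵥ (W₂ *ᵥ (fun i => V i c))) := by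
    rw [hC, traceConj]
    exact Finset.sum_congr rfl fun c _ => dot_sandwich W₁ A W₂ _
  have hT₁ : T₁ = ∑ c, (W₁ᵀ *ᵥ (fun i => V i c)) ⬝ᵥ (W₁ᵀ *ᵥ (fun i => V i c)) := by
    rw [hT₁def, traceConj]
    exact Finset.sum_congr rfl fun c _ => dot_VVt W₁ _
  have hT₂ : T₂ = ∑ c, (W₂ *ᵥ (fun i => V i c)) ⬝ᵥ (W₂ *ᵥ (fun i => V i c)) := by
    rw [hT₂def, traceConj]
    refine Finset.sum_congr rfl fun c _ => ?_
    have h1 : W₂ᵀ * W₂ = W₂ᵀ * (W₂ᵀ)ᵀ := by rw [Matrix.transpose_transpose]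
    rw [h1, dot_VVt, Matrix.transpose_transpose]
  have hCS : (Vᵀ * C * V).trace ≤ N * (Real.sqrt T₁ * Real.sqrt T₂) := by
    rw [hCtrace]
    calc ∑ c, (W₁ᵀ *ᵥ (fun i => V i c)) ⬝ᵥ (A *ᵥ (W₂ *ᵥ (fun i => V i c)))
        ≤ ∑ c, Real.sqrt ((W₁ᵀ *ᵥ (fun i => V i c)) ⬝ᵥ (W₁ᵀ *ᵥ (fun i => V i c)))
            * (N * Real.sqrt ((W₂ *ᵥ (fun i => V i c)) ⬝ᵥ (W₂ *ᵥ (fun i => V i c)))) :=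
          Finset.sum_le_sum fun c _ => percol_cs A _ _
      _ = N * ∑ c, Real.sqrt ((W₁ᵀ *ᵥ (fun i => V i c)) ⬝ᵥ (W₁ᵀ *ᵥ (fun i => V i c)))
            * Real.sqrt ((W₂ *ᵥ (fun i => V i c)) ⬝ᵥ (W₂ *ᵥ (fun i => V i c))) := by
          rw [Finset.mul_sum]
          exact Finset.sum_congr rfl fun c _ => by ring
      _ ≤ N * (Real.sqrt T₁ * Real.sqrt T₂) := by
          refine mul_le_mul_of_nonneg_left ?_ hN0
          rw [hT₁, hT₂]
          exact sum_sqrt_cs _ _ (fun c => dot_self_nonneg _) (fun c => dot_self_nonneg _)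
  -- Step 4: Ky Fan bounds
  set S₁ := ∑ i ∈ Finset.range k, sqSingVal W₁ i with hS₁def
  set S₂ := ∑ i ∈ Finset.range k, sqSingVal W₂ i with hS₂def
  have hkf₁ : T₁ ≤ S₁ := by
    rw [hT₁def, hS₁def]
    have h := kyfan W₁ V hV
    simpa only [sqSingVal] using h
  have hkf₂ : T₂ ≤ S₂ := by
    rw [hT₂def, hS₂def]
    have hM : (W₂ᵀ * W₂).IsHermitian := by
      simpa using Matrix.isHermitian_conjTranspose_mul_self W₂
    have hM0 : ∀ j, 0 ≤ hM.eigenvalues j := fun j =>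
      (Matrix.posSemidef_conjTranspose_mul_self W₂).eigenvalues_nonneg j
    have h := kyfan2 _ hM hM0 V hV
    have hgoal : (Vᵀ * (W₂ᵀ * W₂) * V).trace = (Vᵀ * (W₂ᴴ * W₂) * V).trace := by
      rw [Matrix.conjTranspose_eq_transpose_of_trivial]
    rw [hgoal]
    rw [← hgoal]; simpa only [sqSingVal] using h
  have hT₁0 : 0 ≤ T₁ := by
    rw [hT₁]; exact Finset.sum_nonneg fun c _ => dot_self_nonneg _
  have hT₂0 : 0 ≤ T₂ := by
    rw [hT₂]; exact Finset.sum_nonneg fun c _ => dot_self_nonneg _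
  have hsv0 : ∀ (a b : ℕ) (M : Matrix (Fin a) (Fin b) ℝ) (i : ℕ), 0 ≤ sqSingVal M i := by
    intro a b M i
    rw [sqSingVal]
    by_cases hi : i < b
    · rw [dif_pos hi]
      exact (Matrix.posSemidef_conjTranspose_mul_self M).eigenvalues_nonneg _
    · rw [dif_neg hi]
  have hS₁0 : 0 ≤ S₁ := Finset.sum_nonneg fun i _ => hsv0 _ _ _ i
  have hS₂0 : 0 ≤ S₂ := Finset.sum_nonneg fun i _ => hsv0 _ _ _ i
  -- Step 5: Chebyshev sum inequality
  have hanti : ∀ (a b : ℕ) (M : Matrix (Fin a) (Fin b) ℝ) (i j : ℕ), i ≤ j →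
      sqSingVal M j ≤ sqSingVal M i := by
    intro a b M i j hij
    rw [sqSingVal, sqSingVal]
    by_cases hj : j < b
    · have hi : i < b := lt_of_le_of_lt hij hj
      rw [dif_pos hj, dif_pos hi]
      exact sortedDesc_antitone _ (show (⟨i, hi⟩ : Fin b) ≤ ⟨j, hj⟩ from hij)
    · rw [dif_neg hj]
      by_cases hi : i < b
      · rw [dif_pos hi]
        exact (Matrix.posSemidef_conjTranspose_mul_self M).eigenvalues_nonneg _
      · rw [dif_neg hi]
  have hMono : MonovaryOn (fun i => sqSingVal W₁ i) (fun i => sqSingVal W₂ i)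
      (Finset.range k : Finset ℕ) := by
    intro i _ j _ hlt
    by_cases hij : j ≤ i
    · exact hanti _ _ _ j i hij
    · push_neg at hij
      exact absurd (hanti _ _ _ i j hij.le) (not_le.mpr hlt)
  have hcheb : S₁ * S₂ ≤ (k : ℝ) * ∑ i ∈ Finset.range k, sqSingVal W₁ i * sqSingVal W₂ i := by
    have h := hMono.sum_mul_sum_le_card_mul_sum
    simpa [Finset.card_range, nsmul_eq_mul] using h
  -- Step 6: final arithmetic
  set S := ∑ i ∈ Finset.range k, sqSingVal W₁ i * sqSingVal W₂ i with hSdef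
  have hS0 : 0 ≤ S := Finset.sum_nonneg fun i _ => mul_nonneg (hsv0 _ _ _ i) (hsv0 _ _ _ i)
  have hgx : N ^ 2 * S < αk ^ 2 * k := hgain x hx
  have hk0 : (0:ℝ) < k := by exact_mod_cast hk1
  have hsq : Real.sqrt T₁ * Real.sqrt T₂ ≤ Real.sqrt S₁ * Real.sqrt S₂ :=
    mul_le_mul (Real.sqrt_le_sqrt hkf₁) (Real.sqrt_le_sqrt hkf₂) (Real.sqrt_nonneg _)
      (Real.sqrt_nonneg _)
  have hsq2 : Real.sqrt S₁ * Real.sqrt S₂ ≤ Real.sqrt ((k:ℝ) * S) := by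
    rw [← Real.sqrt_mul hS₁0]
    exact Real.sqrt_le_sqrt hcheb
  have hfin : N * Real.sqrt ((k:ℝ) * S) < αk * k := by
    have h1 : N * Real.sqrt ((k:ℝ) * S) = Real.sqrt (N^2 * ((k:ℝ) * S)) := by
      rw [Real.sqrt_mul (sq_nonneg N), Real.sqrt_sq hN0]
    have h2 : N^2 * ((k:ℝ) * S) < αk^2 * k * k := by nlinarith
    have h3 : Real.sqrt (N^2 * ((k:ℝ)*S)) < Real.sqrt (αk^2 * k * k) := by
      refine Real.sqrt_lt_sqrt ?_ h2
      exact mul_nonneg (sq_nonneg N) (mul_nonneg hk0.le hS0)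
    have h4 : Real.sqrt (αk^2 * k * k) = αk * k := by
      rw [show αk^2 * (k:ℝ) * k = (αk * k)^2 by ring]
      exact Real.sqrt_sq (mul_nonneg hα.le hk0.le)
    rw [h1]
    rw [h4] at h3
    exact h3
  have hCfinal : (Vᵀ * C * V).trace < αk * k := by
    calc (Vᵀ * C * V).trace ≤ N * (Real.sqrt T₁ * Real.sqrt T₂) := hCS
      _ ≤ N * (Real.sqrt S₁ * Real.sqrt S₂) := mul_le_mul_of_nonneg_left hsq hN0
      _ ≤ N * Real.sqrt ((k:ℝ) * S) := mul_le_mul_of_nonneg_left hsq2 hN0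
      _ < αk * k := hfin
  rw [hred]
  linarith
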